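/- Let γ ≥ 1, let ρ and σ be bipartite states on ℂ^{d_A} ⊗ ℂ^{d_R}, and let Φ be a linear map from matrices on ℂ^{d_A} ⊗ ℂ^{d_R} to matrices on ℂ^{d_B} ⊗ ℂ^{d_{R'}} that is trace-preserving, positive (maps positive semidefinite matrices to positive semidefinite matrices), and PPT-preserving in the sense that the composed map T_B ∘ Φ ∘ T_A is positive (where T_A and T_B denote partial transposition on the first tensor factor of the input and output spaces, respectively). Then E_γ^PPT(Φ(ρ)‖Φ(σ)) ≤ E_γ^PPT(ρ‖σ), where the PPT-measured hockey-stick divergences are taken with respect to the bipartitions B:R' and A:R, respectively. -/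

import Mathlib

noncomputable section
open Matrix ComplexOrder

/-- Bipartite complex matrices on ℂ^{d₁} ⊗ ℂ^{d₂}. -/
abbrev BMat (d₁ d₂ : ℕ) := Matrix (Fin d₁ × Fin d₂) (Fin d₁ × Fin d₂) ℂ

/-- The partial transpose on the first tensor factor:
`T_X(M)((x,y),(x',y')) := M((x',y),(x,y'))`. -/
def ptFst {d₁ d₂ : ℕ} (M : BMat d₁ d₂) : BMat d₁ d₂ :=
  fun p q => M (q.1, p.2) (p.1, q.2)

/-- A quantum state: positive semidefinite with unit trace. -/
def IsState {d₁ d₂ : ℕ} (ρ : BMat d₁ d₂) : Prop := ρ.PosSemidef ∧ ρ.trace = 1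

/-- PPT-measured hockey-stick divergence for γ ≥ 1, with the partial transpose taken
on the first tensor factor. -/
def EgPPT {d₁ d₂ : ℕ} (γ : ℝ) (ρ σ : BMat d₁ d₂) : ℝ :=
  sSup {x : ℝ | ∃ M : BMat d₁ d₂, M.PosSemidef ∧ ((1 : BMat d₁ d₂) - M).PosSemidef ∧
    (ptFst M).PosSemidef ∧ ((1 : BMat d₁ d₂) - ptFst M).PosSemidef ∧
    x = ((M * (ρ - (γ : ℂ) • σ)).trace).re}

section Aux

variable {n : Type*} [Fintype n]

lemma aux_trace_nonneg_of_psd {M : Matrix n n ℂ} (hM : M.PosSemidef) : 0 ≤ M.trace := by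
  classical
  rw [Matrix.trace]
  refine Finset.sum_nonneg fun i _ => ?_
  have := hM.dotProduct_mulVec_nonneg (Pi.single i 1)
  simpa [Matrix.mulVec_single, dotProduct, Pi.single_apply] using this

lemma aux_trace_mul_nonneg {A B : Matrix n n ℂ} (hA : A.PosSemidef) (hB : B.PosSemidef) :
    0 ≤ (A * B).trace := by
  classical
  open scoped MatrixOrder in
  obtain ⟨C, rfl⟩ := CStarAlgebra.nonneg_iff_eq_star_mul_self.mp hA.nonneg
  rw [Matrix.star_eq_conjTranspose]
  rw [Matrix.mul_assoc, Matrix.trace_mul_comm]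
  exact aux_trace_nonneg_of_psd (hB.mul_mul_conjTranspose_same C)

lemma aux_trace_mul_vecMulVec (A : Matrix n n ℂ) (x : n → ℂ) :
    (A * Matrix.vecMulVec x (star x)).trace = star x ⬝ᵥ A *ᵥ x := by
  simp only [Matrix.trace, Matrix.diag, Matrix.mul_apply, Matrix.vecMulVec_apply,
    dotProduct, Matrix.mulVec, Pi.star_apply, Finset.mul_sum]
  exact Finset.sum_congr rfl fun i _ => Finset.sum_congr rfl fun j _ => by ring

lemma aux_posSemidef_vecMulVec (x : n → ℂ) : (Matrix.vecMulVec x (star x)).PosSemidef := by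
  rw [Matrix.posSemidef_iff_dotProduct_mulVec]
  constructor
  · ext i j
    simp [Matrix.vecMulVec_apply, Matrix.conjTranspose_apply, mul_comm]
  · intro y
    have h : star y ⬝ᵥ (Matrix.vecMulVec x (star x) *ᵥ y)
        = star (star x ⬝ᵥ y) * (star x ⬝ᵥ y) := by
      simp only [dotProduct, Matrix.mulVec, Matrix.vecMulVec_apply, Pi.star_apply,
        star_sum, star_mul', star_star, Finset.sum_mul_sum, Finset.mul_sum, Finset.sum_mul]
      rw [Finset.sum_comm]
      exact Finset.sum_congr rfl fun i _ => Finset.sum_congr rfl fun j _ => by ring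
    rw [h]
    exact star_mul_self_nonneg _

lemma aux_posSemidef_of_herm_re {A : Matrix n n ℂ} (hA : A.IsHermitian)
    (h : ∀ x : n → ℂ, 0 ≤ ((A * Matrix.vecMulVec x (star x)).trace).re) : A.PosSemidef := by
  refine Matrix.PosSemidef.of_dotProduct_mulVec_nonneg hA fun x => ?_
  rw [← aux_trace_mul_vecMulVec]
  set z := (A * Matrix.vecMulVec x (star x)).trace with hz
  have hherm : star z = z := by
    rw [hz, ← Matrix.trace_conjTranspose, Matrix.conjTranspose_mul,
      (aux_posSemidef_vecMulVec x).1.eq, hA.eq, Matrix.trace_mul_comm]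
  rw [Complex.nonneg_iff]
  refine ⟨h x, ?_⟩
  have := congrArg Complex.im hherm
  simp only [Complex.star_def, Complex.conj_im] at this
  linarith

end Aux

section PtAux

variable {d₁ d₂ : ℕ}

lemma aux_ptFst_ptFst (A : BMat d₁ d₂) : ptFst (ptFst A) = A := rfl

lemma aux_ptFst_conjTranspose (A : BMat d₁ d₂) : ptFst Aᴴ = (ptFst A)ᴴ := rfl

lemma aux_trace_ptFst (A : BMat d₁ d₂) : (ptFst A).trace = A.trace := rfl

lemma aux_trace_ptFst_mul (A B : BMat d₁ d₂) :
    (ptFst A * B).trace = (A * ptFst B).trace := by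
  simp only [Matrix.trace, Matrix.diag, Matrix.mul_apply, ptFst, ← Finset.sum_product',
    Finset.univ_product_univ]
  exact Fintype.sum_equiv
    ⟨fun x => ((x.2.1, x.1.2), (x.1.1, x.2.2)), fun x => ((x.2.1, x.1.2), (x.1.1, x.2.2)),
      fun x => rfl, fun x => rfl⟩ _ _ (fun x => rfl)

end PtAux

/-- Data processing of the PPT-measured hockey-stick divergence under positive,
trace-preserving, PPT-preserving maps. -/
theorem stmt_19 {dA dR dB dR' : ℕ} (γ : ℝ) (hγ : 1 ≤ γ)
    (ρ σ : BMat dA dR) (hρ : IsState ρ) (hσ : IsState σ)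
    (Φ : BMat dA dR →ₗ[ℂ] BMat dB dR')
    (hTP : ∀ X : BMat dA dR, (Φ X).trace = X.trace)
    (hPos : ∀ X : BMat dA dR, X.PosSemidef → (Φ X).PosSemidef)
    (hPPT : ∀ X : BMat dA dR, X.PosSemidef → (ptFst (Φ (ptFst X))).PosSemidef) :
    EgPPT γ (Φ ρ) (Φ σ) ≤ EgPPT γ ρ σ := by
  obtain ⟨hρP, hρT⟩ := hρ
  obtain ⟨hσP, hσT⟩ := hσ
  apply csSup_le_csSup
  · -- bounded above by 1
    refine ⟨1, fun x hx => ?_⟩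
    obtain ⟨M, hM, hIM, -, -, rfl⟩ := hx
    have h1 : (M * (ρ - (γ : ℂ) • σ)).trace = (M * ρ).trace - (γ : ℂ) * (M * σ).trace := by
      rw [Matrix.mul_sub, Matrix.trace_sub, Matrix.mul_smul, Matrix.trace_smul, smul_eq_mul]
    have h2 : 0 ≤ ((M * σ).trace).re :=
      (Complex.nonneg_iff.mp (aux_trace_mul_nonneg hM hσP)).1
    have him : ((M * σ).trace).im = 0 :=
      ((Complex.nonneg_iff.mp (aux_trace_mul_nonneg hM hσP)).2).symm
    have h3 : ((M * ρ).trace).re ≤ 1 := by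
      have h4 := aux_trace_mul_nonneg hIM hρP
      rw [Matrix.sub_mul, Matrix.one_mul, Matrix.trace_sub] at h4
      have h5 := (Complex.nonneg_iff.mp h4).1
      rw [Complex.sub_re, hρT] at h5
      simpa using h5
    rw [h1, Complex.sub_re, Complex.mul_re, Complex.ofReal_re, Complex.ofReal_im, him]
    nlinarith
  · -- nonempty (witness M = 0)
    refine ⟨0, 0, Matrix.PosSemidef.zero, by simpa using Matrix.PosSemidef.one, ?_, ?_, by simp⟩
    · show (ptFst (0 : BMat dB dR')).PosSemidef
      exact Matrix.PosSemidef.zero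
    · show ((1 : BMat dB dR') - ptFst 0).PosSemidef
      have : ptFst (0 : BMat dB dR') = 0 := rfl
      rw [this, sub_zero]
      exact Matrix.PosSemidef.one
  · -- subset via the "adjoint" construction
    rintro x ⟨M, hM, hIM, hPt, hIPt, rfl⟩
    set N : BMat dA dR := fun i j => (M * Φ (Matrix.single j i 1)).trace with hNdef
    set K : BMat dA dR := (2⁻¹ : ℂ) • (N + Nᴴ) with hKdef
    -- the trace identity for N
    have hN : ∀ X : BMat dA dR, (N * X).trace = (M * Φ X).trace := by
      intro X
      have hX : X = ∑ a : Fin dA × Fin dR, ∑ b : Fin dA × Fin dR,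
          X a b • Matrix.single a b (1 : ℂ) := by
        conv_lhs => rw [Matrix.matrix_eq_sum_single X]
        simp [Matrix.smul_single]
      conv_rhs => rw [hX]
      rw [map_sum]
      simp only [map_sum, LinearMap.map_smul, Matrix.mul_sum, Matrix.trace_sum, Matrix.mul_smul,
        Matrix.trace_smul, smul_eq_mul]
      rw [Finset.sum_comm]
      simp only [Matrix.trace, Matrix.diag, Matrix.mul_apply, hNdef]
      exact Finset.sum_congr rfl fun p _ => Finset.sum_congr rfl fun q _ => by ring
    have hNH : ∀ X : BMat dA dR, X.IsHermitian → (Nᴴ * X).trace = star ((N * X).trace) := by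
      intro X hX
      conv_rhs => rw [← Matrix.trace_conjTranspose]
      rw [Matrix.conjTranspose_mul, hX.eq, Matrix.trace_mul_comm]
    have hKre : ∀ X : BMat dA dR, X.IsHermitian →
        ((K * X).trace).re = ((M * Φ X).trace).re := by
      intro X hX
      have ht : (K * X).trace = (2⁻¹ : ℂ) * ((N * X).trace + star ((N * X).trace)) := by
        rw [hKdef, Matrix.smul_mul, Matrix.add_mul, Matrix.trace_smul, Matrix.trace_add,
          hNH X hX, smul_eq_mul]
      rw [ht, hN X]
      set z := (M * Φ X).trace
      simp [Complex.mul_re, Complex.add_re, Complex.add_im, Complex.star_def]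
      ring
    have hKherm : K.IsHermitian := by
      rw [Matrix.IsHermitian, hKdef, Matrix.conjTranspose_smul, Matrix.conjTranspose_add,
        Matrix.conjTranspose_conjTranspose, add_comm]
      congr 1
      simp
    have hKpt_herm : (ptFst K).IsHermitian := by
      rw [Matrix.IsHermitian, ← aux_ptFst_conjTranspose, hKherm.eq]
    have hCherm : ∀ x : (Fin dA × Fin dR) → ℂ,
        (ptFst (Matrix.vecMulVec x (star x))).IsHermitian := by
      intro x
      rw [Matrix.IsHermitian, ← aux_ptFst_conjTranspose, (aux_posSemidef_vecMulVec x).1.eq]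
    have key : ∀ x : (Fin dA × Fin dR) → ℂ,
        ((ptFst K * Matrix.vecMulVec x (star x)).trace).re
          = ((ptFst M * ptFst (Φ (ptFst (Matrix.vecMulVec x (star x))))).trace).re := by
      intro x
      rw [aux_trace_ptFst_mul, hKre _ (hCherm x)]
      conv_rhs => rw [aux_trace_ptFst_mul, aux_ptFst_ptFst]
    -- the four feasibility conditions for K
    have hK1 : K.PosSemidef := by
      refine aux_posSemidef_of_herm_re hKherm fun x => ?_
      rw [hKre _ (aux_posSemidef_vecMulVec x).1]
      exact (Complex.nonneg_iff.mp
        (aux_trace_mul_nonneg hM (hPos _ (aux_posSemidef_vecMulVec x)))).1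
    have hK2 : ((1 : BMat dA dR) - K).PosSemidef := by
      refine aux_posSemidef_of_herm_re (Matrix.isHermitian_one.sub hKherm) fun x => ?_
      rw [Matrix.sub_mul, Matrix.one_mul, Matrix.trace_sub, Complex.sub_re,
        hKre _ (aux_posSemidef_vecMulVec x).1]
      have h0 : 0 ≤ (((1 : BMat dB dR') - M) * Φ (Matrix.vecMulVec x (star x))).trace :=
        aux_trace_mul_nonneg hIM (hPos _ (aux_posSemidef_vecMulVec x))
      rw [Matrix.sub_mul, Matrix.one_mul, Matrix.trace_sub] at h0
      have h1 := (Complex.nonneg_iff.mp h0).1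
      rw [Complex.sub_re, hTP _] at h1
      linarith
    have hK3 : (ptFst K).PosSemidef := by
      refine aux_posSemidef_of_herm_re hKpt_herm fun x => ?_
      rw [key x]
      exact (Complex.nonneg_iff.mp
        (aux_trace_mul_nonneg hPt (hPPT _ (aux_posSemidef_vecMulVec x)))).1
    have hK4 : ((1 : BMat dA dR) - ptFst K).PosSemidef := by
      refine aux_posSemidef_of_herm_re (Matrix.isHermitian_one.sub hKpt_herm) fun x => ?_
      rw [Matrix.sub_mul, Matrix.one_mul, Matrix.trace_sub, Complex.sub_re, key x]
      have h0 : 0 ≤ (((1 : BMat dB dR') - ptFst M)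
          * ptFst (Φ (ptFst (Matrix.vecMulVec x (star x))))).trace :=
        aux_trace_mul_nonneg hIPt (hPPT _ (aux_posSemidef_vecMulVec x))
      rw [Matrix.sub_mul, Matrix.one_mul, Matrix.trace_sub] at h0
      have h1 := (Complex.nonneg_iff.mp h0).1
      rw [Complex.sub_re] at h1
      have h2 : (ptFst (Φ (ptFst (Matrix.vecMulVec x (star x))))).trace
          = (Matrix.vecMulVec x (star x)).trace := by
        rw [aux_trace_ptFst, hTP _, aux_trace_ptFst]
      rw [h2] at h1
      linarith
    refine ⟨K, hK1, hK2, hK3, hK4, ?_⟩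
    have hHerm : (ρ - (γ : ℂ) • σ).IsHermitian := by
      rw [Matrix.IsHermitian, Matrix.conjTranspose_sub, Matrix.conjTranspose_smul,
        hρP.1.eq, hσP.1.eq]
      norm_num
    rw [hKre _ hHerm, map_sub, LinearMap.map_smul]
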